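/- arXiv:2412.10836 — 3 statements merged into one kernel-verified Lean document; each statement's English description precedes it below -/
import Mathlib

section
/- Let (a_n)_{n≥1} be a sequence of nonnegative reals. The following are equivalent: (1) there exists c₁ > 0 such that ∑_{n=1}^∞ (1 − (1 − r)^(n/2)) · a_n ≤ c₁ · r for all r ∈ [0, 1]; (2) there exists c₂ > 0 such that ∑_{n=1}^∞ n · a_n ≤ c₂. Moreover, in the implication (1) ⇒ (2) one may take c₂ = 2c₁, and in (2) ⇒ (1) one may take c₁ = c₂. -/
open Real Set Filter Topology

lemma aux_upper {r : ℝ} (hr0 : 0 ≤ r) (hr1 : r ≤ 1) (n : ℕ) :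
    1 - (1 - r) ^ (((n : ℝ) + 1) / 2) ≤ ((n : ℝ) + 1) * r := by
  have hb0 : (0:ℝ) ≤ 1 - r := by linarith
  have hb1 : (1:ℝ) - r ≤ 1 := by linarith
  have hpos : (0:ℝ) < ((n:ℝ)+1)/2 := by positivity
  have h1 : (1 - r) ^ (n+1 : ℕ) ≤ (1 - r) ^ (((n : ℝ) + 1) / 2) := by
    rcases eq_or_lt_of_le hb0 with h | h
    · rw [← h]
      simp [Real.zero_rpow (ne_of_gt hpos), zero_pow]
    · rw [show ((1-r) ^ (n+1 : ℕ) : ℝ) = (1-r) ^ ((n+1 : ℕ) : ℝ) by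
        rw [Real.rpow_natCast]]
      apply Real.rpow_le_rpow_of_exponent_ge h hb1
      push_cast; linarith
  have h2 : 1 - ((n:ℝ)+1) * r ≤ (1 - r) ^ (n+1 : ℕ) := by
    have h := one_add_mul_le_pow (a := -r) (by linarith : (-2:ℝ) ≤ -r) (n+1)
    rw [show (1:ℝ) + -r = 1 - r by ring] at h
    push_cast at h ⊢
    linarith
  linarith

lemma aux_deriv (c : ℝ) (p : ℝ) :
    HasDerivAt (fun r : ℝ => c * (1 - (1 - r) ^ p)) (c * p) 0 := by
  have h1 : HasDerivAt (fun r : ℝ => 1 - r) (-1) 0 :=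
    (hasDerivAt_id (0:ℝ)).const_sub 1
  have h2 : HasDerivAt (fun x : ℝ => x ^ p) (p * (1:ℝ) ^ (p - 1)) 1 :=
    Real.hasDerivAt_rpow_const (Or.inl one_ne_zero)
  have h2' : HasDerivAt (fun x : ℝ => x ^ p) (p * (1:ℝ) ^ (p - 1))
      ((fun r : ℝ => 1 - r) 0) := by simpa using h2
  have h3 : HasDerivAt (fun r : ℝ => (1 - r) ^ p) ((p * (1:ℝ) ^ (p-1)) * (-1)) 0 :=
    h2'.comp 0 h1
  have h4 := (h3.const_sub 1).const_mul c
  simpa [Real.one_rpow] using h4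

lemma aux_nonneg {r : ℝ} (hr0 : 0 ≤ r) (hr1 : r ≤ 1) (p : ℝ) (hp : 0 ≤ p) :
    0 ≤ 1 - (1 - r) ^ p := by
  have : (1 - r) ^ p ≤ 1 :=
    Real.rpow_le_one (by linarith) (by linarith) hp
  linarith

lemma aux_dir1 (a : ℕ → ℝ) (ha : ∀ n, 0 ≤ a n) (c₁ : ℝ) (hc₁ : 0 < c₁)
    (H : ∀ r ∈ Set.Icc (0:ℝ) 1,
      ∑' n : ℕ, ENNReal.ofReal ((1 - (1 - r) ^ (((n:ℝ)+1)/2)) * a n)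
        ≤ ENNReal.ofReal (c₁ * r)) :
    ∑' n : ℕ, ENNReal.ofReal (((n:ℝ)+1) * a n) ≤ ENNReal.ofReal (2 * c₁) := by
  have key : ∀ N : ℕ, ∑ n ∈ Finset.range N, a n * (((n:ℝ)+1)/2) ≤ c₁ := by
    intro N
    set p : ℕ → ℝ := fun n => ((n:ℝ)+1)/2 with hp
    set F : ℝ → ℝ := fun r => ∑ n ∈ Finset.range N, a n * (1 - (1-r) ^ p n) with hF
    have hD : HasDerivAt F (∑ n ∈ Finset.range N, a n * p n) 0 :=
      HasDerivAt.fun_sum fun n _ => aux_deriv (a n) (p n)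
    have hF0 : F 0 = 0 := by simp [hF, Real.one_rpow]
    have hslope : Tendsto (fun r => F r / r) (𝓝[>] (0:ℝ))
        (𝓝 (∑ n ∈ Finset.range N, a n * p n)) := by
      have h5 := (hasDerivAt_iff_tendsto_slope.mp hD).mono_left
        (nhdsWithin_mono 0 (fun x hx => ne_of_gt hx))
      refine h5.congr fun r => ?_
      simp [slope_def_field, hF0]
    have hbound : ∀ r ∈ Ioc (0:ℝ) 1, F r / r ≤ c₁ := by
      rintro r ⟨hr0, hr1⟩
      have h1 : ∑ n ∈ Finset.range N,
          ENNReal.ofReal ((1 - (1 - r) ^ p n) * a n) ≤ ENNReal.ofReal (c₁ * r) :=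
        le_trans (ENNReal.sum_le_tsum _) (H r ⟨hr0.le, hr1⟩)
      have hnn : ∀ n ∈ Finset.range N, 0 ≤ (1 - (1 - r) ^ p n) * a n := fun n _ =>
        mul_nonneg (aux_nonneg hr0.le hr1 (p n) (by positivity)) (ha n)
      rw [← ENNReal.ofReal_sum_of_nonneg hnn] at h1
      have h2 : ∑ n ∈ Finset.range N, (1 - (1 - r) ^ p n) * a n ≤ c₁ * r :=
        (ENNReal.ofReal_le_ofReal_iff (by positivity)).mp h1
      rw [div_le_iff₀ hr0, hF]
      calc ∑ n ∈ Finset.range N, a n * (1 - (1-r) ^ p n)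
          = ∑ n ∈ Finset.range N, (1 - (1 - r) ^ p n) * a n := by
            simp [mul_comm]
        _ ≤ c₁ * r := h2
    exact le_of_tendsto hslope (mem_of_superset
      (Ioc_mem_nhdsGT_of_mem ⟨le_refl 0, one_pos⟩) hbound)
  rw [ENNReal.tsum_eq_iSup_sum]
  refine iSup_le fun s => ?_
  obtain ⟨N, hsN⟩ := s.exists_nat_subset_range
  have hnn : ∀ n ∈ s, 0 ≤ ((n:ℝ)+1) * a n := fun n _ => mul_nonneg (by positivity) (ha n)
  rw [← ENNReal.ofReal_sum_of_nonneg hnn]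
  apply ENNReal.ofReal_le_ofReal
  calc ∑ n ∈ s, ((n:ℝ)+1) * a n
      ≤ ∑ n ∈ Finset.range N, ((n:ℝ)+1) * a n := by
        apply Finset.sum_le_sum_of_subset_of_nonneg hsN
        intro n _ _; exact mul_nonneg (by positivity) (ha n)
    _ = 2 * ∑ n ∈ Finset.range N, a n * (((n:ℝ)+1)/2) := by
        rw [Finset.mul_sum]; apply Finset.sum_congr rfl; intro n _; ring
    _ ≤ 2 * c₁ := by linarith [key N]

lemma aux_dir2 (a : ℕ → ℝ) (ha : ∀ n, 0 ≤ a n) (c₂ : ℝ)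
    (H : ∑' n : ℕ, ENNReal.ofReal (((n:ℝ)+1) * a n) ≤ ENNReal.ofReal c₂)
    {r : ℝ} (hr0 : 0 ≤ r) (hr1 : r ≤ 1) :
    ∑' n : ℕ, ENNReal.ofReal ((1 - (1 - r) ^ (((n:ℝ)+1)/2)) * a n)
      ≤ ENNReal.ofReal (c₂ * r) := by
  calc ∑' n : ℕ, ENNReal.ofReal ((1 - (1 - r) ^ (((n:ℝ)+1)/2)) * a n)
      ≤ ∑' n : ℕ, ENNReal.ofReal r * ENNReal.ofReal (((n:ℝ)+1) * a n) := by
        apply ENNReal.tsum_le_tsum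
        intro n
        rw [← ENNReal.ofReal_mul hr0]
        apply ENNReal.ofReal_le_ofReal
        calc (1 - (1 - r) ^ (((n:ℝ)+1)/2)) * a n
            ≤ (((n:ℝ)+1) * r) * a n :=
              mul_le_mul_of_nonneg_right (aux_upper hr0 hr1 n) (ha n)
          _ = r * (((n:ℝ)+1) * a n) := by ring
    _ = ENNReal.ofReal r * ∑' n : ℕ, ENNReal.ofReal (((n:ℝ)+1) * a n) :=
        ENNReal.tsum_mul_left
    _ ≤ ENNReal.ofReal r * ENNReal.ofReal c₂ := by
        exact mul_le_mul_right H _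
    _ = ENNReal.ofReal (c₂ * r) := by
        rw [← ENNReal.ofReal_mul hr0, mul_comm]

theorem stmt3 (a : ℕ → ℝ) (ha : ∀ n, 0 ≤ a n) :
    ((∃ c₁ > (0 : ℝ), ∀ r ∈ Set.Icc (0 : ℝ) 1,
        ∑' n : ℕ, ENNReal.ofReal ((1 - (1 - r) ^ (((n : ℝ) + 1) / 2)) * a n)
          ≤ ENNReal.ofReal (c₁ * r)) ↔
      (∃ c₂ > (0 : ℝ),
        ∑' n : ℕ, ENNReal.ofReal (((n : ℝ) + 1) * a n) ≤ ENNReal.ofReal c₂))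
    ∧ (∀ c₁ > (0 : ℝ),
        (∀ r ∈ Set.Icc (0 : ℝ) 1,
          ∑' n : ℕ, ENNReal.ofReal ((1 - (1 - r) ^ (((n : ℝ) + 1) / 2)) * a n)
            ≤ ENNReal.ofReal (c₁ * r)) →
        ∑' n : ℕ, ENNReal.ofReal (((n : ℝ) + 1) * a n) ≤ ENNReal.ofReal (2 * c₁))
    ∧ (∀ c₂ > (0 : ℝ),
        (∑' n : ℕ, ENNReal.ofReal (((n : ℝ) + 1) * a n) ≤ ENNReal.ofReal c₂) →
        ∀ r ∈ Set.Icc (0 : ℝ) 1,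
          ∑' n : ℕ, ENNReal.ofReal ((1 - (1 - r) ^ (((n : ℝ) + 1) / 2)) * a n)
            ≤ ENNReal.ofReal (c₂ * r)) := by
  refine ⟨⟨?_, ?_⟩, ?_, ?_⟩
  · rintro ⟨c₁, hc₁, H⟩
    exact ⟨2 * c₁, by linarith, aux_dir1 a ha c₁ hc₁ H⟩
  · rintro ⟨c₂, hc₂, H⟩
    exact ⟨c₂, hc₂, fun r hr => aux_dir2 a ha c₂ H hr.1 hr.2⟩
  · intro c₁ hc₁ H
    exact aux_dir1 a ha c₁ hc₁ H
  · intro c₂ _ H r hr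
    exact aux_dir2 a ha c₂ H hr.1 hr.2
end

section
/- Let 0 ≤ c ≤ s, let D : [c, s] → ℝ be measurable and bounded, let 1 < p < q < ∞ and q − p + 1 ≤ ρ ≤ q, and let K > 0. Set α := q/(q − p) and β with 1 = 1/α + 1/β, and D*(s) := sup_{u ∈ [c, s]} |D(u)|. Then (∫_c^s |D(u)|^ρ du)^(p/q) ≤ (1/K)^α · (D*(s))^p + K^β · ∫_c^s (|D(u)| + |D(u)|^p) du. -/
open MeasureTheory Real Set

theorem stmt6 (c s : ℝ) (hc : 0 ≤ c) (hcs : c ≤ s)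
    (D : ℝ → ℝ) (hD : Measurable D) (M : ℝ) (hbd : ∀ u, |D u| ≤ M)
    (ρ q p K α β : ℝ) (hp : 1 < p) (hpq : p < q) (hρ1 : q - p + 1 ≤ ρ) (hρ2 : ρ ≤ q)
    (hK : 0 < K) (hα : α = q / (q - p)) (hβ : 1 = 1 / α + 1 / β) :
    (∫ u in Set.Icc c s, |D u| ^ ρ) ^ (p / q)
      ≤ (1 / K) ^ α * (⨆ u ∈ Set.Icc c s, |D u|) ^ p
        + K ^ β * ∫ u in Set.Icc c s, (|D u| + |D u| ^ p) := by
  have hq0 : 0 < q := by linarith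
  have hqp : 0 < q - p := by linarith
  have hp0 : 0 < p := by linarith
  have hρ0 : 0 < ρ := by linarith
  have hM : 0 ≤ M := le_trans (abs_nonneg _) (hbd c)
  set Dstar := ⨆ u ∈ Set.Icc c s, |D u| with hDstar
  have hDle : ∀ u ∈ Set.Icc c s, |D u| ≤ Dstar := by
    intro u hu
    have hb : BddAbove (Set.range fun v => ⨆ _ : v ∈ Set.Icc c s, |D v|) := by
      refine ⟨M, ?_⟩
      rintro x ⟨v, rfl⟩
      exact Real.iSup_le (fun _ => hbd v) hM
    have h1 := le_ciSup hb u
    rwa [ciSup_pos hu] at h1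
  have hD0 : 0 ≤ Dstar := le_trans (abs_nonneg _) (hDle c ⟨le_refl c, hcs⟩)
  -- pointwise bound
  have key : ∀ u ∈ Set.Icc c s,
      |D u| ^ ρ ≤ Dstar ^ (q - p) * (|D u| + |D u| ^ p) := by
    intro u hu
    by_cases h1 : |D u| ≤ 1
    · rcases eq_or_lt_of_le (abs_nonneg (D u)) with h0 | h0
      · rw [← h0, Real.zero_rpow hρ0.ne']
        positivity
      · calc |D u| ^ ρ ≤ |D u| ^ (q - p + 1) :=
              Real.rpow_le_rpow_of_exponent_ge h0 h1 hρ1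
          _ = |D u| ^ (q - p) * |D u| := by
              rw [Real.rpow_add h0, Real.rpow_one]
          _ ≤ Dstar ^ (q - p) * |D u| :=
              mul_le_mul_of_nonneg_right
                (Real.rpow_le_rpow (abs_nonneg _) (hDle u hu) hqp.le) (abs_nonneg _)
          _ ≤ Dstar ^ (q - p) * (|D u| + |D u| ^ p) := by
              apply mul_le_mul_of_nonneg_left _ (Real.rpow_nonneg hD0 _)
              have : (0:ℝ) ≤ |D u| ^ p := Real.rpow_nonneg (abs_nonneg _) _
              linarith
    · push_neg at h1
      calc |D u| ^ ρ ≤ |D u| ^ q :=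
            Real.rpow_le_rpow_of_exponent_le h1.le hρ2
        _ = |D u| ^ (q - p) * |D u| ^ p := by
            rw [← Real.rpow_add (by linarith : (0:ℝ) < |D u|), sub_add_cancel]
        _ ≤ Dstar ^ (q - p) * |D u| ^ p :=
            mul_le_mul_of_nonneg_right
              (Real.rpow_le_rpow (abs_nonneg _) (hDle u hu) hqp.le)
              (Real.rpow_nonneg (abs_nonneg _) _)
        _ ≤ Dstar ^ (q - p) * (|D u| + |D u| ^ p) := by
            apply mul_le_mul_of_nonneg_left _ (Real.rpow_nonneg hD0 _)
            have := abs_nonneg (D u)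
            linarith
  -- integrability
  have hfin : volume (Set.Icc c s) ≠ ⊤ := by
    rw [Real.volume_Icc]; exact ENNReal.ofReal_ne_top
  have hfi : IntegrableOn (fun u => |D u| ^ ρ) (Set.Icc c s) := by
    apply Measure.integrableOn_of_bounded hfin
      (((Real.continuous_rpow_const hρ0.le).measurable.comp hD.abs).aestronglyMeasurable) (M := M ^ ρ)
    filter_upwards with u
    simp only [Function.comp_apply, Real.norm_eq_abs]
    rw [abs_of_nonneg (Real.rpow_nonneg (abs_nonneg _) _)]
    exact Real.rpow_le_rpow (abs_nonneg _) (hbd u) hρ0.le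
  have hgi : IntegrableOn (fun u => |D u| + |D u| ^ p) (Set.Icc c s) := by
    apply Measure.integrableOn_of_bounded hfin
      ((hD.abs.add ((Real.continuous_rpow_const hp0.le).measurable.comp hD.abs)).aestronglyMeasurable) (M := M + M ^ p)
    filter_upwards with u
    simp only [Pi.add_apply, Function.comp_apply, Real.norm_eq_abs]
    rw [abs_of_nonneg (add_nonneg (abs_nonneg _) (Real.rpow_nonneg (abs_nonneg _) _))]
    exact add_le_add (hbd u) (Real.rpow_le_rpow (abs_nonneg _) (hbd u) hp0.le)
  have hgi' : IntegrableOn (fun u => Dstar ^ (q - p) * (|D u| + |D u| ^ p))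
      (Set.Icc c s) := hgi.const_mul _
  set I := ∫ u in Set.Icc c s, (|D u| + |D u| ^ p) with hI
  have hI0 : 0 ≤ I := by
    apply setIntegral_nonneg measurableSet_Icc
    intro u _
    positivity
  have hInt : (∫ u in Set.Icc c s, |D u| ^ ρ) ≤ Dstar ^ (q - p) * I := by
    rw [hI, ← MeasureTheory.integral_const_mul]
    exact setIntegral_mono_on hfi hgi' measurableSet_Icc key
  have hL0 : 0 ≤ ∫ u in Set.Icc c s, |D u| ^ ρ := by
    apply setIntegral_nonneg measurableSet_Icc
    intro u _
    positivity
  have step1 : (∫ u in Set.Icc c s, |D u| ^ ρ) ^ (p / q)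
      ≤ (Dstar ^ (q - p) * I) ^ (p / q) :=
    Real.rpow_le_rpow hL0 hInt (by positivity)
  have step2 : (Dstar ^ (q - p) * I) ^ (p / q)
      = Dstar ^ ((q - p) * (p / q)) * I ^ (p / q) := by
    rw [Real.mul_rpow (Real.rpow_nonneg hD0 _) hI0, ← Real.rpow_mul hD0]
  -- conjugate exponents
  have hα1 : 1 < α := by
    rw [hα]
    rw [lt_div_iff₀ hqp]
    linarith
  have hα0 : α ≠ 0 := by linarith
  have h1α : 1 / α = (q - p) / q := by
    rw [hα]; field_simp
  have hsum : (q - p) / q + p / q = 1 := by field_simp; ring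
  have h1β : 1 / β = p / q := by linarith
  have hβpos : 0 < β := by
    rcases lt_trichotomy β 0 with h | h | h
    · have h2 : 1 / β < 0 := one_div_neg.mpr h
      have h3 : 0 < p / q := by positivity
      linarith
    · rw [h] at h1β
      simp at h1β
      have h3 : 0 < p / q := by positivity
      linarith
    · exact h
  have hβval : β = q / p := by
    rw [div_eq_div_iff hβpos.ne' hq0.ne'] at h1β
    rw [eq_div_iff hp0.ne']
    linarith
  have hconj : α.HolderConjugate β := by
    rw [Real.holderConjugate_iff]
    constructor
    · exact hα1
    · rw [inv_eq_one_div, inv_eq_one_div, ← hβ]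
  have young := Real.young_inequality_of_nonneg
    (a := (1 / K) * Dstar ^ ((q - p) * (p / q))) (b := K * I ^ (p / q))
    (by positivity) (by positivity) hconj
  have hab : (1 / K) * Dstar ^ ((q - p) * (p / q)) * (K * I ^ (p / q))
      = Dstar ^ ((q - p) * (p / q)) * I ^ (p / q) := by
    field_simp
  have haα : ((1 / K) * Dstar ^ ((q - p) * (p / q))) ^ α
      = (1 / K) ^ α * Dstar ^ p := by
    rw [Real.mul_rpow (by positivity) (Real.rpow_nonneg hD0 _),
      ← Real.rpow_mul hD0]
    congr 1
    rw [hα]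
    field_simp
  have hbβ : (K * I ^ (p / q)) ^ β = K ^ β * I := by
    rw [Real.mul_rpow hK.le (Real.rpow_nonneg hI0 _), ← Real.rpow_mul hI0,
      hβval]
    congr 1
    rw [show p / q * (q / p) = 1 by field_simp, Real.rpow_one]
  rw [hab, haα, hbβ] at young
  have hβ1 : 1 ≤ β := hconj.symm.lt.le
  calc (∫ u in Set.Icc c s, |D u| ^ ρ) ^ (p / q)
      ≤ Dstar ^ ((q - p) * (p / q)) * I ^ (p / q) := step2 ▸ step1
    _ ≤ (1 / K) ^ α * Dstar ^ p / α + K ^ β * I / β := young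
    _ ≤ (1 / K) ^ α * Dstar ^ p + K ^ β * I := by
        have h1 : (1 / K) ^ α * Dstar ^ p / α ≤ (1 / K) ^ α * Dstar ^ p :=
          div_le_self (by positivity) hα1.le
        have h2 : K ^ β * I / β ≤ K ^ β * I :=
          div_le_self (by positivity) hβ1
        linarith
end

section
/- Fix θ ∈ (0, 1) and n ∈ ℕ, and let S_n^θ be as defined via S_n^θ(x) := 2^{−(n+1)(θ−1)} ∫_0^{|x|} r_n(y) dy, where r_n is the Rademacher-type step function r_n(y) = ∑_{i=1}^∞ (1_{((2i−2)/2^{n+1},(2i−1)/2^{n+1}]}(y) − 1_{((2i−1)/2^{n+1},(2i)/2^{n+1}]}(y)). Then the θ-Hölder seminorm of S_n^θ equals 1, i.e. sup_{x ≠ y} |S_n^θ(x) − S_n^θ(y)|/|x − y|^θ = 1. -/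
open MeasureTheory Set intervalIntegral




theorem rn_step {n : ℕ} {rn : ℝ → ℝ}
    (hrn : ∀ y : ℝ, rn y =
      ∑' i : ℕ,
        ((Set.Ioc ((2 * (i : ℝ)) / 2 ^ (n + 1)) ((2 * (i : ℝ) + 1) / 2 ^ (n + 1))).indicator
            (fun _ => (1 : ℝ)) y
          - (Set.Ioc ((2 * (i : ℝ) + 1) / 2 ^ (n + 1)) ((2 * (i : ℝ) + 2) / 2 ^ (n + 1))).indicator
            (fun _ => (1 : ℝ)) y))
    (k : ℕ) {y : ℝ} (h1 : (k : ℝ) / 2 ^ (n + 1) < y) (h2 : y ≤ ((k : ℝ) + 1) / 2 ^ (n + 1)) :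
    rn y = (-1 : ℝ) ^ k := by
  have hc : (0:ℝ) < 2 ^ (n + 1) := by positivity
  have hdiv : ∀ a b : ℝ, a ≤ b → a / 2 ^ (n+1) ≤ b / 2 ^ (n+1) := fun a b hab =>
    (div_le_div_iff_of_pos_right hc).2 hab
  rw [hrn, tsum_eq_single (k / 2)]
  · rcases Nat.even_or_odd k with ⟨m, hm⟩ | ⟨m, hm⟩
    · have hk2 : k / 2 = m := by omega
      have hkR : (k:ℝ) = 2*m := by push_cast [hm]; ring
      rw [hk2]
      rw [Set.indicator_of_mem (by exact ⟨by rw [← hkR]; exact h1,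
            h2.trans (hdiv _ _ (by rw [hkR]))⟩),
          Set.indicator_of_notMem (by
            intro hmem
            exact absurd (h2.trans (hdiv _ _ (by rw [hkR]))) (not_le.2 hmem.1))]
      simp [Even.neg_one_pow ⟨m, hm⟩]
    · have hk2 : k / 2 = m := by omega
      have hkR : (k:ℝ) = 2*m + 1 := by push_cast [hm]; ring
      rw [hk2]
      rw [Set.indicator_of_notMem (by
            intro hmem
            exact absurd (h1.trans_le hmem.2) (not_lt.2 (le_of_eq (by rw [hkR])))),
          Set.indicator_of_mem (by exact ⟨by rw [← hkR]; exact h1,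
            h2.trans (hdiv _ _ (by rw [hkR]; ring_nf; exact le_refl _))⟩)]
      simp [Odd.neg_one_pow ⟨m, hm⟩]
  · intro j hj
    have hcase : 2*j + 2 ≤ k ∨ k + 1 ≤ 2*j := by omega
    rcases hcase with hle | hge
    · have h2j : (2*(j:ℝ)+2) / 2^(n+1) < y := lt_of_le_of_lt (hdiv _ _ (by
        push_cast; exact_mod_cast (by exact_mod_cast Nat.cast_le.2 hle : ((2*j+2:ℕ):ℝ) ≤ (k:ℝ)))) h1
      rw [Set.indicator_of_notMem, Set.indicator_of_notMem, sub_zero]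
      · intro hmem
        exact absurd hmem.2 (not_le.2 (lt_of_le_of_lt (hdiv _ _ (by linarith)) h2j))
      · intro hmem
        exact absurd hmem.2 (not_le.2 (lt_of_le_of_lt (hdiv _ _ (by linarith)) h2j))
    · have h2j : y ≤ (2*(j:ℝ)) / 2^(n+1) := h2.trans (hdiv _ _ (by
        exact_mod_cast (by exact_mod_cast Nat.cast_le.2 hge : ((k+1:ℕ):ℝ) ≤ ((2*j:ℕ):ℝ))))
      rw [Set.indicator_of_notMem, Set.indicator_of_notMem, sub_zero]
      · intro hmem
        exact absurd (h2j.trans (hdiv _ _ (by linarith))) (not_le.2 hmem.1)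
      · intro hmem
        exact absurd h2j (not_le.2 hmem.1)

section generic
variable {rn : ℝ → ℝ} {c : ℝ}

theorem piece_integrable (hc : 0 < c)
    (hstep : ∀ (k : ℕ) (y : ℝ), (k:ℝ)/c < y → y ≤ ((k:ℝ)+1)/c → rn y = (-1:ℝ)^k)
    (k : ℕ) {a b : ℝ} (ha : (k:ℝ)/c ≤ a) (hab : a ≤ b) (hb : b ≤ ((k:ℝ)+1)/c) :
    IntervalIntegrable rn volume a b := by
  rw [intervalIntegrable_iff_integrableOn_Ioc_of_le hab]
  have : EqOn rn (fun _ => (-1:ℝ)^k) (Ioc a b) := fun y hy =>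
    hstep k y (lt_of_le_of_lt ha hy.1) (hy.2.trans hb)
  exact (integrableOn_congr_fun this measurableSet_Ioc).2 (integrableOn_const (by
    exact measure_Ioc_lt_top.ne))

theorem piece_integral (hc : 0 < c)
    (hstep : ∀ (k : ℕ) (y : ℝ), (k:ℝ)/c < y → y ≤ ((k:ℝ)+1)/c → rn y = (-1:ℝ)^k)
    (k : ℕ) {a b : ℝ} (ha : (k:ℝ)/c ≤ a) (hab : a ≤ b) (hb : b ≤ ((k:ℝ)+1)/c) :
    ∫ y in a..b, rn y = (-1:ℝ)^k * (b - a) := by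
  rw [integral_of_le hab]
  have : EqOn rn (fun _ => (-1:ℝ)^k) (Ioc a b) := fun y hy =>
    hstep k y (lt_of_le_of_lt ha hy.1) (hy.2.trans hb)
  rw [setIntegral_congr_fun measurableSet_Ioc this, setIntegral_const, measureReal_def, Real.volume_Ioc,
    ENNReal.toReal_ofReal (by linarith), smul_eq_mul, mul_comm]

theorem int_on_grid (hc : 0 < c)
    (hstep : ∀ (k : ℕ) (y : ℝ), (k:ℝ)/c < y → y ≤ ((k:ℝ)+1)/c → rn y = (-1:ℝ)^k)
    (k : ℕ) : IntervalIntegrable rn volume 0 ((k:ℝ)/c) := by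
  induction k with
  | zero => simp [IntervalIntegrable.refl]
  | succ k ih =>
    refine ih.trans (piece_integrable hc hstep k le_rfl ?_ (by push_cast; linarith))
    exact (div_le_div_iff_of_pos_right hc).2 (by push_cast; linarith)

theorem int_to (hc : 0 < c)
    (hstep : ∀ (k : ℕ) (y : ℝ), (k:ℝ)/c < y → y ≤ ((k:ℝ)+1)/c → rn y = (-1:ℝ)^k)
    {t : ℝ} (ht : 0 ≤ t) : IntervalIntegrable rn volume 0 t := by
  obtain ⟨k, hk⟩ : ∃ k : ℕ, t ≤ (k:ℝ)/c := by
    refine ⟨⌈t * c⌉₊, ?_⟩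
    rw [le_div_iff₀ hc]
    exact Nat.le_ceil _
  exact (int_on_grid hc hstep k).mono_set (by
    rw [Set.uIcc_of_le ht, Set.uIcc_of_le (ht.trans hk)]
    exact Set.Icc_subset_Icc le_rfl hk)

theorem F_grid (hc : 0 < c)
    (hstep : ∀ (k : ℕ) (y : ℝ), (k:ℝ)/c < y → y ≤ ((k:ℝ)+1)/c → rn y = (-1:ℝ)^k)
    (k : ℕ) : ∫ y in (0:ℝ)..((k:ℝ)/c), rn y = if Even k then 0 else 1/c := by
  induction k with
  | zero => simp
  | succ k ih =>
    have hstep2 : ((k:ℝ)+1)/c - (k:ℝ)/c = 1/c := by field_simp; ring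
    have hle : (k:ℝ)/c ≤ ((k:ℝ)+1)/c := by
      rw [div_le_div_iff₀ hc hc]; nlinarith
    have hadd := integral_add_adjacent_intervals (int_on_grid hc hstep k)
      (piece_integrable hc hstep k le_rfl hle le_rfl)
    have hcast : (((k+1:ℕ)):ℝ)/c = ((k:ℝ)+1)/c := by push_cast; ring
    rw [hcast, ← hadd, ih, piece_integral hc hstep k le_rfl hle le_rfl, hstep2]
    rcases Nat.even_or_odd k with he | ho
    · rw [if_pos he, if_neg (by simp [Nat.even_add_one, he]), Even.neg_one_pow he]; ring
    · rw [if_neg (by simp [Nat.not_even_iff_odd.2 ho]), if_pos (by simp [Nat.even_add_one,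
        Nat.not_even_iff_odd.2 ho]), Odd.neg_one_pow ho]; ring

theorem exists_step (hc : 0 < c) {t : ℝ} (ht : 0 < t) :
    ∃ k : ℕ, (k:ℝ)/c < t ∧ t ≤ ((k:ℝ)+1)/c := by
  refine ⟨⌈t * c⌉₊ - 1, ?_, ?_⟩
  · rw [div_lt_iff₀ hc]
    have h1 : 1 ≤ ⌈t * c⌉₊ := Nat.one_le_ceil_iff.2 (by positivity)
    have := Nat.ceil_lt_add_one (le_of_lt (show (0:ℝ) < t * c by positivity))
    push_cast [h1]
    linarith
  · rw [le_div_iff₀ hc]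
    have h1 : 1 ≤ ⌈t * c⌉₊ := Nat.one_le_ceil_iff.2 (by positivity)
    have := Nat.le_ceil (t * c)
    push_cast [h1]
    linarith

theorem F_bounds (hc : 0 < c)
    (hstep : ∀ (k : ℕ) (y : ℝ), (k:ℝ)/c < y → y ≤ ((k:ℝ)+1)/c → rn y = (-1:ℝ)^k)
    {t : ℝ} (ht : 0 ≤ t) :
    0 ≤ ∫ y in (0:ℝ)..t, rn y ∧ ∫ y in (0:ℝ)..t, rn y ≤ 1/c := by
  rcases eq_or_lt_of_le ht with rfl | ht
  · simp [one_div, le_of_lt (inv_pos.2 hc)]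
  obtain ⟨k, hk1, hk2⟩ := exists_step hc ht
  have hk0 : 0 ≤ (k:ℝ)/c := by positivity
  have hadd := integral_add_adjacent_intervals (int_on_grid hc hstep k)
    (piece_integrable hc hstep k le_rfl hk1.le hk2)
  rw [← hadd, F_grid hc hstep, piece_integral hc hstep k le_rfl hk1.le hk2]
  have h1 : t - (k:ℝ)/c ≤ 1/c := by
    have : ((k:ℝ)+1)/c - (k:ℝ)/c = 1/c := by field_simp; ring
    linarith
  rcases Nat.even_or_odd k with he | ho
  · rw [if_pos he, Even.neg_one_pow he]
    constructor <;> nlinarith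
  · rw [if_neg (Nat.not_even_iff_odd.2 ho), Odd.neg_one_pow ho]
    constructor <;> nlinarith

theorem F_lip (hc : 0 < c)
    (hstep : ∀ (k : ℕ) (y : ℝ), (k:ℝ)/c < y → y ≤ ((k:ℝ)+1)/c → rn y = (-1:ℝ)^k)
    (hbd : ∀ y : ℝ, |rn y| ≤ 1)
    {a b : ℝ} (ha : 0 ≤ a) (hab : a ≤ b) :
    |(∫ y in (0:ℝ)..b, rn y) - ∫ y in (0:ℝ)..a, rn y| ≤ b - a := by
  have hib : IntervalIntegrable rn volume a b :=
    ((int_to hc hstep (ha.trans hab)).mono_set (by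
      rw [Set.uIcc_of_le (ha.trans hab), Set.uIcc_of_le hab]
      exact Set.Icc_subset_Icc ha le_rfl))
  have hadd := integral_add_adjacent_intervals (int_to hc hstep ha) hib
  have : (∫ y in (0:ℝ)..b, rn y) - ∫ y in (0:ℝ)..a, rn y = ∫ y in a..b, rn y := by
    rw [← hadd]; ring
  rw [this]
  have := intervalIntegral.norm_integral_le_of_norm_le_const (C := 1) (f := rn)
    (a := a) (b := b) (fun x _ => by rw [Real.norm_eq_abs]; exact hbd x)
  rw [Real.norm_eq_abs] at this
  calc |∫ y in a..b, rn y| ≤ 1 * |b - a| := this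
  _ = b - a := by rw [one_mul, abs_of_nonneg (by linarith)]

end generic

theorem rn_zero {n : ℕ} {rn : ℝ → ℝ}
    (hrn : ∀ y : ℝ, rn y =
      ∑' i : ℕ,
        ((Set.Ioc ((2 * (i : ℝ)) / 2 ^ (n + 1)) ((2 * (i : ℝ) + 1) / 2 ^ (n + 1))).indicator
            (fun _ => (1 : ℝ)) y
          - (Set.Ioc ((2 * (i : ℝ) + 1) / 2 ^ (n + 1)) ((2 * (i : ℝ) + 2) / 2 ^ (n + 1))).indicator
            (fun _ => (1 : ℝ)) y))
    {y : ℝ} (hy : y ≤ 0) : rn y = 0 := by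
  rw [hrn]
  have : ∀ i : ℕ,
      ((Set.Ioc ((2 * (i : ℝ)) / 2 ^ (n + 1)) ((2 * (i : ℝ) + 1) / 2 ^ (n + 1))).indicator
          (fun _ => (1 : ℝ)) y
        - (Set.Ioc ((2 * (i : ℝ) + 1) / 2 ^ (n + 1)) ((2 * (i : ℝ) + 2) / 2 ^ (n + 1))).indicator
          (fun _ => (1 : ℝ)) y) = 0 := by
    intro i
    have hc : (0:ℝ) < 2 ^ (n + 1) := by positivity
    rw [Set.indicator_of_notMem, Set.indicator_of_notMem, sub_zero]
    · intro hmem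
      exact absurd hmem.1 (not_lt.2 (hy.trans (by positivity)))
    · intro hmem
      exact absurd hmem.1 (not_lt.2 (hy.trans (by positivity)))
  simp only [this, tsum_zero]

theorem stmt10 (θ : ℝ) (hθ : θ ∈ Set.Ioo (0 : ℝ) 1) (n : ℕ)
    (rn : ℝ → ℝ)
    (hrn : ∀ y : ℝ, rn y =
      ∑' i : ℕ,
        ((Set.Ioc ((2 * (i : ℝ)) / 2 ^ (n + 1)) ((2 * (i : ℝ) + 1) / 2 ^ (n + 1))).indicator
            (fun _ => (1 : ℝ)) y
          - (Set.Ioc ((2 * (i : ℝ) + 1) / 2 ^ (n + 1)) ((2 * (i : ℝ) + 2) / 2 ^ (n + 1))).indicator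
            (fun _ => (1 : ℝ)) y))
    (S : ℝ → ℝ)
    (hS : ∀ x : ℝ, S x = (2 : ℝ) ^ (-((n : ℝ) + 1) * (θ - 1)) * ∫ y in Set.Ioc 0 |x|, rn y) :
    sSup {v : ℝ | ∃ x y : ℝ, x ≠ y ∧ v = |S x - S y| / |x - y| ^ θ} = 1 := by
  obtain ⟨hθ0, hθ1⟩ := hθ
  set c : ℝ := 2 ^ (n + 1) with hcdef
  have hc : (0:ℝ) < c := by positivity
  set η : ℝ := 1 / c with hηdef
  have hη : 0 < η := by positivity
  set K : ℝ := (2 : ℝ) ^ (-((n : ℝ) + 1) * (θ - 1)) with hKdef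
  have hstep : ∀ (k : ℕ) (y : ℝ), (k:ℝ)/c < y → y ≤ ((k:ℝ)+1)/c → rn y = (-1:ℝ)^k :=
    fun k y h1 h2 => rn_step hrn k h1 h2
  have hbd : ∀ y : ℝ, |rn y| ≤ 1 := by
    intro y
    rcases le_or_gt y 0 with hy | hy
    · rw [rn_zero hrn hy]; norm_num
    · obtain ⟨k, hk1, hk2⟩ := exists_step hc hy
      rw [hstep k y hk1 hk2, abs_pow, abs_neg, abs_one, one_pow]
  -- express the base 2 powers
  have hcr : c = (2:ℝ) ^ ((n:ℝ) + 1) := by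
    rw [hcdef, ← Real.rpow_natCast 2 (n+1)]; push_cast; ring_nf
  have hηr : η = (2:ℝ) ^ (-((n:ℝ) + 1)) := by
    rw [hηdef, hcr, Real.rpow_neg (by norm_num), one_div]
  have hK : K = η ^ (θ - 1) := by
    rw [hKdef, hηr, ← Real.rpow_mul (by norm_num : (0:ℝ) ≤ 2)]
  have hKpos : 0 < K := by rw [hK]; exact Real.rpow_pos_of_pos hη _
  have hηθ : η ^ (θ - 1) * η = η ^ θ := by
    nth_rewrite 2 [← Real.rpow_one η]
    rw [← Real.rpow_add hη]; ring_nf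
  -- S in terms of interval integral
  have hS' : ∀ x : ℝ, S x = K * ∫ y in (0:ℝ)..|x|, rn y := by
    intro x
    rw [hS x, intervalIntegral.integral_of_le (abs_nonneg x)]
  -- the main Hölder bound
  have hmain : ∀ x y : ℝ, x ≠ y → |S x - S y| ≤ |x - y| ^ θ := by
    have key : ∀ x y : ℝ, x ≠ y → |y| ≤ |x| → |S x - S y| ≤ |x - y| ^ θ := by
      intro x y hxy hyx
      set m : ℝ := |x - y| with hmdef
      have hm : 0 < m := abs_pos.2 (sub_ne_zero.2 hxy)
      have hd : |x| - |y| ≤ m := by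
        have := abs_abs_sub_abs_le_abs_sub x y
        rw [abs_of_nonneg (by linarith : (0:ℝ) ≤ |x| - |y|)] at this
        exact this
      have hFb := F_bounds hc hstep (abs_nonneg x)
      have hFa := F_bounds hc hstep (abs_nonneg y)
      have hlip := F_lip hc hstep hbd (abs_nonneg y) hyx
      have hDη : |(∫ z in (0:ℝ)..|x|, rn z) - ∫ z in (0:ℝ)..|y|, rn z| ≤ η := by
        rw [abs_sub_le_iff]
        constructor <;> [skip; skip] <;> rw [hηdef] <;> linarith [hFb.1, hFb.2, hFa.1, hFa.2]
      have habs : |S x - S y| = K * |(∫ z in (0:ℝ)..|x|, rn z) - ∫ z in (0:ℝ)..|y|, rn z| := by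
        rw [hS' x, hS' y, ← mul_sub, abs_mul, abs_of_pos hKpos]
      rw [habs]
      rcases le_total m η with hmη | hηm
      · have h1 : K * |(∫ z in (0:ℝ)..|x|, rn z) - ∫ z in (0:ℝ)..|y|, rn z| ≤ K * m :=
          mul_le_mul_of_nonneg_left (hlip.trans (hd.trans le_rfl)) hKpos.le
        have h2 : η ^ (θ - 1) ≤ m ^ (θ - 1) :=
          Real.rpow_le_rpow_of_nonpos hm hmη (by linarith)
        calc K * |(∫ z in (0:ℝ)..|x|, rn z) - ∫ z in (0:ℝ)..|y|, rn z| ≤ K * m := h1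
          _ = η ^ (θ - 1) * m := by rw [hK]
          _ ≤ m ^ (θ - 1) * m := mul_le_mul_of_nonneg_right h2 hm.le
          _ = m ^ θ := by
              nth_rewrite 2 [← Real.rpow_one m]
              rw [← Real.rpow_add hm]; ring_nf
      · calc K * |(∫ z in (0:ℝ)..|x|, rn z) - ∫ z in (0:ℝ)..|y|, rn z| ≤ K * η :=
              mul_le_mul_of_nonneg_left hDη hKpos.le
          _ = η ^ θ := by rw [hK, hηθ]
          _ ≤ m ^ θ := Real.rpow_le_rpow hη.le hηm hθ0.le
    intro x y hxy
    rcases le_total |y| |x| with hyx | hxy'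
    · exact key x y hxy hyx
    · have := key y x (Ne.symm hxy) hxy'
      rwa [abs_sub_comm (S y) (S x), abs_sub_comm y x] at this
  have hub : ∀ v ∈ {v : ℝ | ∃ x y : ℝ, x ≠ y ∧ v = |S x - S y| / |x - y| ^ θ}, v ≤ 1 := by
    rintro v ⟨x, y, hxy, rfl⟩
    have hpos : 0 < |x - y| ^ θ :=
      Real.rpow_pos_of_pos (abs_pos.2 (sub_ne_zero.2 hxy)) _
    rw [div_le_one hpos]
    exact hmain x y hxy
  -- the witness pair (η, 0)
  have hS0 : S 0 = 0 := by rw [hS 0]; simp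
  have hSη : S η = K * η := by
    rw [hS η, abs_of_pos hη]
    congr 1
    have heq : EqOn rn (fun _ => (1:ℝ)) (Set.Ioc 0 η) := by
      intro z hz
      have h0 : ((0:ℕ):ℝ)/c < z := by simpa using hz.1
      have h1 : z ≤ (((0:ℕ):ℝ)+1)/c := by
        simpa [hηdef] using hz.2
      simpa using hstep 0 z h0 h1
    rw [setIntegral_congr_fun measurableSet_Ioc heq, setIntegral_const, measureReal_def, Real.volume_Ioc,
      ENNReal.toReal_ofReal (by linarith), smul_eq_mul, sub_zero, mul_one]
  have hmem : (1:ℝ) ∈ {v : ℝ | ∃ x y : ℝ, x ≠ y ∧ v = |S x - S y| / |x - y| ^ θ} := by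
    refine ⟨η, 0, hη.ne', ?_⟩
    rw [hSη, hS0, sub_zero, sub_zero, abs_of_pos (by positivity : 0 < K * η),
      abs_of_pos hη, hK, hηθ, div_self (ne_of_gt (Real.rpow_pos_of_pos hη θ))]
  refine le_antisymm (Real.sSup_le hub (by norm_num)) (le_csSup ⟨1, hub⟩ hmem)
end
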